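/- Let S = K[x_1, x_2, x_3] and I = ((x_1x_2)^{w_1}, x_2x_3) with w_1 ≥ 2. Then for all t ≥ 1, reg(S/I^t) = 2t·w_1 - 1 and depth(S/I^t) = 1. -/

import Mathlib

open MvPolynomial

noncomputable section

namespace EWGraph

variable (K : Type) [Field K]

/-- The polynomial ring `K[x_1,…,x_n]`. -/
abbrev Poly (n : ℕ) := MvPolynomial (Fin n) K

variable {K}

/-- `g` is the degree-`d` part of a twisted copy `S(-tw)` of the polynomial ring:
it is homogeneous of degree `d - tw` (and `0` if `d - tw < 0`). -/
def PieceHomog {n : ℕ} (tw d : ℤ) (g : Poly K n) : Prop :=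
  if 0 ≤ d - tw then g.IsHomogeneous (d - tw).toNat else g = 0

/-- The augmentation map `S^m → S` sending the `k`-th basis vector to `g k`. -/
def aug {n m : ℕ} (g : Fin m → Poly K n) : (Fin m → Poly K n) →ₗ[Poly K n] Poly K n where
  toFun v := ∑ k, v k * g k
  map_add' u v := by simp [add_mul, Finset.sum_add_distrib]
  map_smul' c v := by simp [Finset.mul_sum, mul_assoc]

/-- A graded free resolution
`⋯ → F_1 → F_0 → S → S/I → 0` of `S/I`, where `F_i = ⊕_k S(-t i k)` has rank `r i`,
all differentials are given by homogeneous matrices, the image of `F_0 → S` is `I`,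
and the complex is exact in positive degrees. -/
structure GradedRes {n : ℕ} (I : Ideal (Poly K n)) where
  r : ℕ → ℕ
  t : (i : ℕ) → Fin (r i) → ℤ
  g : Fin (r 0) → Poly K n
  ghom : ∀ k, PieceHomog 0 (t 0 k) (g k)
  gspan : Ideal.span (Set.range g) = I
  d : (i : ℕ) → Matrix (Fin (r i)) (Fin (r (i + 1))) (Poly K n)
  dhom : ∀ i k k', PieceHomog (t i k) (t (i + 1) k') (d i k k')
  exact_zero : LinearMap.ker (aug g) = LinearMap.range (d 0).mulVecLin
  exact_succ : ∀ i, LinearMap.ker (d i).mulVecLin = LinearMap.range (d (i + 1)).mulVecLin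

/-- The projective dimension of `S/I`: the smallest possible length of a graded free
resolution of `S/I` (the minimal graded free resolution achieves it). -/
def pdQuot {n : ℕ} (I : Ideal (Poly K n)) : ℕ :=
  sInf {m : ℕ | ∃ F : GradedRes I, ∀ i : ℕ, m ≤ i → F.r i = 0}

/-- The depth of `S/I` with respect to the graded maximal ideal; by the
Auslander–Buchsbaum formula it equals `n - pd(S/I)`. -/
def depthQuot {n : ℕ} (I : Ideal (Poly K n)) : ℕ := n - pdQuot I

/-- The Castelnuovo–Mumford regularity `reg(S/I) = max { j - i : β_{i,j}(S/I) ≠ 0 }`: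
the smallest `ρ` such that some (equivalently, the minimal) graded free resolution of
`S/I` has all twists in homological degree `i` bounded by `i + ρ`. (The free module
`F_i` above sits in homological degree `i + 1` of the resolution of `S/I`.) -/
def regQuot {n : ℕ} (I : Ideal (Poly K n)) : ℕ :=
  sInf {ρ : ℕ | ∃ F : GradedRes I, ∀ (i : ℕ) (k : Fin (F.r i)), F.t i k ≤ (ρ : ℤ) + i + 1}

end EWGraph

open MvPolynomial

noncomputable section

-- generic: span pair pow
theorem span_pair_pow {R : Type*} [CommSemiring R] (p q : R) (n : ℕ) :
    (Ideal.span {p, q}) ^ n =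
      Ideal.span (Set.range fun i : Fin (n+1) => p ^ (i:ℕ) * q ^ (n - (i:ℕ))) := by
  induction n with
  | zero =>
    simp only [pow_zero, Ideal.one_eq_top]
    have h1 : (1 : R) ∈ Ideal.span (Set.range fun i : Fin 1 => p ^ (i:ℕ) * q ^ (0 - (i:ℕ))) := by
      apply Ideal.subset_span
      exact ⟨0, by simp⟩
    exact (Ideal.eq_top_iff_one _).mpr h1 |>.symm
  | succ n ih =>
    apply le_antisymm
    · rw [pow_succ, ih, Ideal.span_mul_span']
      rw [Ideal.span_le]
      rintro x ⟨y, ⟨i, rfl⟩, z, hz, rfl⟩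
      rcases hz with rfl | rfl
      · -- z = p
        apply Ideal.subset_span
        refine ⟨⟨(i:ℕ)+1, by omega⟩, ?_⟩
        have hi : (i:ℕ) ≤ n := by omega
        simp only
        rw [pow_succ]
        have : n + 1 - ((i:ℕ)+1) = n - (i:ℕ) := by omega
        rw [this]; ring
      · apply Ideal.subset_span
        refine ⟨⟨(i:ℕ), by omega⟩, ?_⟩
        have hi : (i:ℕ) ≤ n := by omega
        simp only
        have : n + 1 - (i:ℕ) = (n - (i:ℕ)) + 1 := by omega
        rw [this, pow_succ]; ring
    · rw [Ideal.span_le]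
      rintro x ⟨i, rfl⟩
      have hi : (i:ℕ) ≤ n + 1 := by omega
      have hp : p ∈ Ideal.span {p, q} := Ideal.subset_span (by simp)
      have hq : q ∈ Ideal.span {p, q} := Ideal.subset_span (by simp)
      have h1 : p ^ (i:ℕ) ∈ (Ideal.span {p, q}) ^ (i:ℕ) := Ideal.pow_mem_pow hp _
      have h2 : q ^ (n+1-(i:ℕ)) ∈ (Ideal.span {p, q}) ^ (n+1-(i:ℕ)) := Ideal.pow_mem_pow hq _
      have := Ideal.mul_mem_mul h1 h2
      rwa [← pow_add, show (i:ℕ) + (n+1-(i:ℕ)) = n+1 by omega] at this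


/-- Syzygies of `a^i b^(n-i)`. -/
theorem syz {R : Type*} [CommRing R] [IsDomain R] {a b : R} (hb0 : b ≠ 0)
    (hcancel : ∀ (p : R) (n : ℕ), b ∣ p * a ^ n → b ∣ p) :
    ∀ (n : ℕ) (v : ℕ → R), (∑ i ∈ Finset.range (n+1), v i * (a ^ i * b ^ (n - i))) = 0 →
    ∃ c : ℕ → R, (∀ k, n ≤ k → c k = 0) ∧
      ∀ k ≤ n, v k = a * c k - b * (if k = 0 then 0 else c (k-1)) := by
  intro n
  induction n with
  | zero =>
    intro v hv
    rw [Finset.sum_range_one] at hv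
    simp only [Nat.sub_zero, pow_zero, one_mul, mul_one] at hv
    refine ⟨0, fun k _ => rfl, ?_⟩
    intro k hk
    have : k = 0 := by omega
    subst this
    simp [hv]
  | succ n ih =>
    intro v hv
    have hlast : b ∣ v (n+1) := by
      apply hcancel _ (n+1)
      have h1 : v (n+1) * a ^ (n+1) = -∑ i ∈ Finset.range (n+1), v i * (a ^ i * b ^ (n+1-i)) := by
        rw [Finset.sum_range_succ] at hv
        simp only [Nat.sub_self, pow_zero, mul_one] at hv
        linear_combination hv
      rw [h1]
      apply dvd_neg.mpr
      apply Finset.dvd_sum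
      intro i hi
      rw [Finset.mem_range] at hi
      have h2 : n + 1 - i = (n - i) + 1 := by omega
      rw [h2, pow_succ]
      exact ⟨v i * (a ^ i * b ^ (n-i)), by ring⟩
    obtain ⟨u, hu⟩ := hlast
    set v' : ℕ → R := fun i => if i = n+1 then 0 else if i = n then v n + a * u else v i with hv'def
    have hv'n : v' n = v n + a * u := by
      show (if n = n+1 then 0 else if n = n then v n + a * u else v n) = v n + a * u
      rw [if_neg (by omega : ¬ n = n+1), if_pos rfl]
    have hv'n1 : v' (n+1) = 0 := by
      show (if n+1 = n+1 then 0 else if n+1 = n then v n + a * u else v (n+1)) = 0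
      rw [if_pos rfl]
    have hv'i : ∀ i, i < n → v' i = v i := by
      intro i hi
      show (if i = n+1 then 0 else if i = n then v n + a * u else v i) = v i
      rw [if_neg (by omega : ¬ i = n+1), if_neg (by omega : ¬ i = n)]
    have hsum' : ∑ i ∈ Finset.range (n+1), v' i * (a ^ i * b ^ (n - i)) = 0 := by
      have ha1 : n + 1 - n = 1 := by omega
      have ha2 : n + 1 - (n+1) = 0 := by omega
      have hcong : ∑ i ∈ Finset.range n, v' i * (a ^ i * b ^ (n+1-i))
          = ∑ i ∈ Finset.range n, v i * (a ^ i * b ^ (n+1-i)) :=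
        Finset.sum_congr rfl (fun i hi => by rw [hv'i i (Finset.mem_range.mp hi)])
      have e1 : ∑ i ∈ Finset.range (n+2), v' i * (a ^ i * b ^ (n+1-i)) = 0 := by
        rw [Finset.sum_range_succ, Finset.sum_range_succ, hv'n, hv'n1, ha1, ha2, hcong]
        rw [Finset.sum_range_succ, Finset.sum_range_succ, ha1, ha2] at hv
        linear_combination hv - a^(n+1) * hu
      rw [Finset.sum_range_succ, hv'n1, zero_mul, add_zero] at e1
      have key : (∑ i ∈ Finset.range (n+1), v' i * (a ^ i * b ^ (n - i))) * b = 0 := by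
        rw [Finset.sum_mul, ← e1]
        apply Finset.sum_congr rfl
        intro i hi
        rw [Finset.mem_range] at hi
        have h2 : n + 1 - i = (n - i) + 1 := by omega
        rw [h2, pow_succ]
        ring
      rcases mul_eq_zero.mp key with h | h
      · exact h
      · exact absurd h hb0
    obtain ⟨c', hc'0, hc'⟩ := ih v' hsum'
    refine ⟨fun k => if k = n then -u else c' k, ?_, ?_⟩
    · intro k hk
      show (if k = n then -u else c' k) = 0
      rw [if_neg (by omega : k ≠ n)]
      exact hc'0 k (by omega)
    · intro k hk
      show v k = a * (if k = n then -u else c' k)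
        - b * (if k = 0 then 0 else if k - 1 = n then -u else c' (k-1))
      rcases Nat.lt_or_ge k n with hkn | hkn
      · -- k < n
        have h1 := hc' k (le_of_lt hkn)
        rw [hv'i k hkn] at h1
        rw [h1, if_neg (by omega : k ≠ n)]
        by_cases hk0 : k = 0
        · simp [hk0]
        · rw [if_neg hk0, if_neg hk0, if_neg (by omega : k - 1 ≠ n)]
      by_cases hkeq : k = n
      · subst hkeq
        have h1 := hc' k le_rfl
        rw [hv'n, hc'0 k le_rfl, mul_zero, zero_sub] at h1
        rw [if_pos rfl]
        by_cases hk0 : k = 0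
        · subst hk0
          rw [if_pos rfl] at h1 ⊢
          rw [mul_zero, sub_zero]
          linear_combination h1
        · rw [if_neg hk0] at h1 ⊢
          rw [if_neg (by omega : k - 1 ≠ k)]
          linear_combination h1
      · -- k = n+1
        have hk1 : k = n + 1 := by omega
        subst hk1
        rw [if_neg (by omega : n+1 ≠ n), hc'0 (n+1) (by omega), mul_zero, zero_sub,
          if_neg (by omega : n+1 ≠ 0)]
        have h3 : n + 1 - 1 = n := by omega
        rw [h3, if_pos rfl, hu]
        ring


variable {K : Type} [Field K]

abbrev S3 (K : Type) [Field K] := MvPolynomial (Fin 3) K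

/-- substitution killing variable s -/
def killX (K : Type) [Field K] (s : Fin 3) : S3 K →ₐ[K] S3 K :=
  aeval (fun i => if i = s then 0 else X i)

theorem killX_monomial (s : Fin 3) (v : Fin 3 →₀ ℕ) (c : K) :
    killX K s (monomial v c) = if v s = 0 then monomial v c else 0 := by
  rw [killX, aeval_monomial]
  by_cases h : v s = 0
  · rw [if_pos h]
    have : (v.prod fun i k => (if i = s then (0:S3 K) else X i) ^ k)
        = v.prod fun i k => (X i : S3 K) ^ k := by
      apply Finsupp.prod_congr
      intro i hi
      rw [if_neg]
      intro he
      exact (Finsupp.mem_support_iff.mp hi) (he ▸ h)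
    rw [this]
    rw [Finsupp.prod]
    rw [prod_X_pow_eq_monomial]
    simp [algebraMap_eq, C_mul_monomial]
  · rw [if_neg h]
    have : (v.prod fun i k => (if i = s then (0:S3 K) else X i) ^ k) = 0 := by
      rw [Finsupp.prod]
      apply Finset.prod_eq_zero (Finsupp.mem_support_iff.mpr h)
      rw [if_pos rfl, zero_pow h]
    rw [this, mul_zero]

theorem dvd_sub_killX (s : Fin 3) (p : S3 K) : X s ∣ p - killX K s p := by
  have hps : p - killX K s p
      = ∑ v ∈ p.support, ((monomial v (coeff v p)) - killX K s (monomial v (coeff v p))) := by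
    rw [Finset.sum_sub_distrib, ← map_sum, ← p.as_sum]
  rw [hps]
  apply Finset.dvd_sum
  intro v hv
  rw [killX_monomial]
  by_cases h : v s = 0
  · rw [if_pos h, sub_self]
    exact dvd_zero _
  · rw [if_neg h, sub_zero]
    refine ⟨monomial (v - Finsupp.single s 1) (coeff v p), ?_⟩
    have hvv : Finsupp.single s 1 + (v - Finsupp.single s 1) = v := by
      ext i
      rw [Finsupp.add_apply, Finsupp.tsub_apply]
      by_cases hi : i = s
      · subst hi; rw [Finsupp.single_eq_same]; omega
      · rw [Finsupp.single_eq_of_ne' (Ne.symm hi)]; omega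
    rw [X, monomial_mul, one_mul, hvv]

theorem killX_homog (s : Fin 3) {p : S3 K} {n : ℕ} (h : p.IsHomogeneous n) :
    (killX K s p).IsHomogeneous n := by
  have := h.aeval (fun i => if i = s then (0 : S3 K) else X i) (n := 1) (fun i => by
    show ((if i = s then (0 : S3 K) else X i)).IsHomogeneous 1
    by_cases hi : i = s
    · rw [if_pos hi]; exact isHomogeneous_zero _ _ _
    · rw [if_neg hi]; exact isHomogeneous_X _ _)
  simpa [killX] using this

theorem killX_X_of_ne {s i : Fin 3} (h : i ≠ s) : killX K s (X i) = X i := by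
  simp [killX, aeval_X, if_neg h]

theorem killX_X_self (s : Fin 3) : killX K s (X s) = 0 := by
  simp [killX, aeval_X]

/-- divisor bound: if a monomial divides a nonzero homogeneous polynomial -/
theorem monomial_dvd_homog_le {μ : Fin 3 →₀ ℕ} {p : S3 K} {n : ℕ} (hp : p ≠ 0)
    (hh : p.IsHomogeneous n) (hdvd : monomial μ (1:K) ∣ p) :
    Finsupp.weight 1 μ ≤ n := by
  obtain ⟨q, rfl⟩ := hdvd
  have hq : q ≠ 0 := fun h => hp (by rw [h, mul_zero])
  obtain ⟨α, hα⟩ := MvPolynomial.ne_zero_iff.mp hq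
  have hc : coeff (μ + α) (monomial μ (1:K) * q) ≠ 0 := by
    rw [coeff_monomial_mul, one_mul]; exact hα
  have := hh hc
  rw [map_add] at this
  omega

/-- if a nonzero homogeneous polynomial divides a monomial -/
theorem homog_dvd_monomial_le {μ : Fin 3 →₀ ℕ} {p : S3 K} {n : ℕ}
    (hh : p.IsHomogeneous n) (hdvd : p ∣ monomial μ (1:K)) :
    n ≤ Finsupp.weight 1 μ := by
  obtain ⟨q, hq⟩ := hdvd
  have hc : coeff μ (monomial μ (1:K)) ≠ 0 := by
    rw [coeff_monomial, if_pos rfl]; exact one_ne_zero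
  rw [hq, coeff_mul] at hc
  obtain ⟨⟨β, γ⟩, hmem, hne⟩ := Finset.exists_ne_zero_of_sum_ne_zero hc
  have hβ : coeff β p ≠ 0 := fun h => hne (by simp [h])
  have hadd : β + γ = μ := Finset.HasAntidiagonal.mem_antidiagonal.mp hmem
  have := hh hβ
  rw [← hadd, map_add]
  omega
namespace EWGraph

variable {K : Type} [Field K]

/-- generators -/
def pA (K : Type) [Field K] (w1 : ℕ) : Poly K 3 := (X 0 * X 1) ^ w1
def pB (K : Type) [Field K] : Poly K 3 := X 1 * X 2
def sa (K : Type) [Field K] (w1 : ℕ) : Poly K 3 := X 0 ^ w1 * X 1 ^ (w1 - 1)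
def sb (K : Type) [Field K] : Poly K 3 := X 2

def rr (t : ℕ) : ℕ → ℕ
  | 0 => t + 1
  | 1 => t
  | _+2 => 0

def tt (w1 t : ℕ) : (i : ℕ) → Fin (rr t i) → ℤ
  | 0 => fun k => ((2*w1*(k:ℕ) + 2*(t-(k:ℕ)) : ℕ) : ℤ)
  | 1 => fun j => ((2*w1*((j:ℕ)+1) + 2*(t-((j:ℕ)+1)) : ℕ) : ℤ) + 1
  | _+2 => fun k => Fin.elim0 k

def gg (K : Type) [Field K] (w1 t : ℕ) : Fin (t+1) → Poly K 3 :=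
  fun i => pA K w1 ^ (i:ℕ) * pB K ^ (t - (i:ℕ))

def d0 (K : Type) [Field K] (w1 t : ℕ) : Matrix (Fin (t+1)) (Fin t) (Poly K 3) :=
  fun k j => (if (k:ℕ) = (j:ℕ) then sa K w1 else 0) +
    (if (k:ℕ) = (j:ℕ)+1 then -sb K else 0)

def dd (K : Type) [Field K] (w1 t : ℕ) :
    (i : ℕ) → Matrix (Fin (rr t i)) (Fin (rr t (i+1))) (Poly K 3)
  | 0 => d0 K w1 t
  | (i+1) => fun _ k => Fin.elim0 k

example (t : ℕ) : rr t 0 = t + 1 := rfl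
example (t : ℕ) (i : ℕ) : rr t (i+2) = 0 := rfl

theorem gg_homog (w1 t : ℕ) (k : Fin (t+1)) :
    (gg K w1 t k).IsHomogeneous (2*w1*(k:ℕ) + 2*(t-(k:ℕ))) := by
  have h1 : (pA K w1 ^ (k:ℕ)).IsHomogeneous (2*w1*(k:ℕ)) := by
    have := (((isHomogeneous_X K (0 : Fin 3)).mul (isHomogeneous_X K 1)).pow w1).pow (k:ℕ)
    simpa [pA, mul_assoc] using this
  have h2 : (pB K ^ (t-(k:ℕ))).IsHomogeneous (2*(t-(k:ℕ))) := by
    have := ((isHomogeneous_X K (1 : Fin 3)).mul (isHomogeneous_X K 2)).pow (t-(k:ℕ))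
    simpa [pB] using this
  exact h1.mul h2

theorem sa_homog (w1 : ℕ) (hw1 : 1 ≤ w1) : (sa K w1).IsHomogeneous (2*w1 - 1) := by
  have := (isHomogeneous_X_pow (R := K) (0 : Fin 3) w1).mul
    (isHomogeneous_X_pow (R := K) (1 : Fin 3) (w1 - 1))
  rw [show w1 + (w1 - 1) = 2*w1 - 1 by omega] at this
  exact this

theorem tt0_eq (w1 t : ℕ) (k : Fin (t+1)) :
    tt w1 t 0 k = ((2*w1*(k:ℕ) + 2*(t-(k:ℕ)) : ℕ) : ℤ) := rfl

theorem tt1_eq (w1 t : ℕ) (j : Fin t) :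
    tt w1 t 1 j = ((2*w1*((j:ℕ)+1) + 2*(t-((j:ℕ)+1)) : ℕ) : ℤ) + 1 := rfl

theorem ghom_res (w1 t : ℕ) (k : Fin (t+1)) :
    PieceHomog 0 (tt w1 t 0 k) (gg K w1 t k) := by
  rw [PieceHomog, tt0_eq, sub_zero, if_pos (Int.natCast_nonneg _), Int.toNat_natCast]
  exact gg_homog w1 t k

theorem gspan_res (w1 t : ℕ) :
    Ideal.span (Set.range (gg K w1 t)) = (Ideal.span {pA K w1, pB K}) ^ t :=
  (_root_.span_pair_pow _ _ t).symm

theorem dhom0_res (w1 t : ℕ) (hw1 : 1 ≤ w1) (k : Fin (t+1)) (k' : Fin t) :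
    PieceHomog (tt w1 t 0 k) (tt w1 t 1 k') (d0 K w1 t k k') := by
  have hk : (k:ℕ) ≤ t := by omega
  have hk' : (k':ℕ) + 1 ≤ t := k'.isLt
  rw [d0, PieceHomog]
  by_cases h1 : (k:ℕ) = (k':ℕ)
  · rw [if_pos h1, if_neg (show ¬((k:ℕ) = (k':ℕ)+1) by omega), add_zero]
    have hD : tt w1 t 1 k' - tt w1 t 0 k = ((2*w1 - 1 : ℕ) : ℤ) := by
      rw [tt1_eq, tt0_eq, ← h1]
      have e1 : ((t - (k:ℕ) : ℕ) : ℤ) = (t:ℤ) - (k:ℕ) := by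
        rw [Int.ofNat_sub hk]
      have e2 : ((t - ((k:ℕ)+1) : ℕ) : ℤ) = (t:ℤ) - (k:ℕ) - 1 := by
        rw [Int.ofNat_sub (by omega)]; push_cast; ring
      have e3 : ((2*w1 - 1 : ℕ) : ℤ) = 2*(w1:ℤ) - 1 := by
        rw [Int.ofNat_sub (by omega)]; push_cast; ring
      push_cast [e1, e2, e3]
      ring
    rw [hD, if_pos (Int.natCast_nonneg _), Int.toNat_natCast]
    exact sa_homog w1 hw1
  · by_cases h2 : (k:ℕ) = (k':ℕ)+1
    · rw [if_neg h1, if_pos h2, zero_add]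
      have hD : tt w1 t 1 k' - tt w1 t 0 k = ((1 : ℕ) : ℤ) := by
        rw [tt1_eq, tt0_eq, h2]
        have e2 : ((t - ((k':ℕ)+1) : ℕ) : ℤ) = (t:ℤ) - (k':ℕ) - 1 := by
          rw [Int.ofNat_sub (by omega)]; push_cast; ring
        push_cast [e2]
        ring
      rw [hD, if_pos (Int.natCast_nonneg _), Int.toNat_natCast]
      exact (isHomogeneous_X K (2 : Fin 3)).neg
    · rw [if_neg h1, if_neg h2, add_zero]
      by_cases h3 : (0:ℤ) ≤ tt w1 t 1 k' - tt w1 t 0 k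
      · rw [if_pos h3]; exact isHomogeneous_zero _ _ _
      · rw [if_neg h3]

end EWGraph
namespace EWGraph

variable {K : Type} [Field K]

theorem sa_ne_zero (w1 : ℕ) : sa K w1 ≠ 0 :=
  mul_ne_zero (pow_ne_zero _ (X_ne_zero _)) (pow_ne_zero _ (X_ne_zero _))

theorem sb_ne_zero : sb K ≠ 0 := X_ne_zero _

theorem killX2_sa (w1 : ℕ) : killX K 2 (sa K w1) = sa K w1 := by
  rw [sa, map_mul, map_pow, map_pow, killX_X_of_ne (by decide : (0 : Fin 3) ≠ 2),
    killX_X_of_ne (by decide : (1 : Fin 3) ≠ 2)]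

theorem hcancel_sb (w1 : ℕ) : ∀ (p : Poly K 3) (n : ℕ), sb K ∣ p * sa K w1 ^ n → sb K ∣ p := by
  intro p n ⟨q, hq⟩
  have h2 : killX K 2 p * (sa K w1) ^ n = 0 := by
    have := congrArg (killX K 2) hq
    rw [map_mul, map_mul, map_pow, killX2_sa,
      (show killX K 2 (sb K) = 0 from killX_X_self 2)] at this
    rw [this, zero_mul]
  have hp : killX K 2 p = 0 := by
    rcases mul_eq_zero.mp h2 with h | h
    · exact h
    · exact absurd h (pow_ne_zero _ (sa_ne_zero w1))
  have := dvd_sub_killX (K := K) 2 p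
  rwa [hp, sub_zero] at this

theorem pA_eq (w1 : ℕ) (hw1 : 1 ≤ w1) : pA K w1 = X 1 * sa K w1 := by
  have h1 : (X 1 : Poly K 3) ^ w1 = X 1 * X 1 ^ (w1 - 1) := by
    conv_lhs => rw [show w1 = 1 + (w1 - 1) by omega]
    rw [pow_add, pow_one]
  rw [pA, sa, mul_pow, h1]
  ring

theorem pB_eq : pB K = X 1 * sb K := rfl

theorem gg_eq (w1 t : ℕ) (hw1 : 1 ≤ w1) (k : Fin (t+1)) :
    gg K w1 t k = X 1 ^ t * (sa K w1 ^ (k:ℕ) * sb K ^ (t - (k:ℕ))) := by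
  have h1 : (X 1 : Poly K 3) ^ (k:ℕ) * X 1 ^ (t - (k:ℕ)) = X 1 ^ t := by
    rw [← pow_add, show (k:ℕ) + (t - (k:ℕ)) = t by omega]
  rw [gg, pA_eq w1 hw1, pB_eq, mul_pow, mul_pow, ← h1]
  ring

theorem aug_apply {n m : ℕ} (g : Fin m → Poly K n) (v : Fin m → Poly K n) :
    aug g v = ∑ k, v k * g k := rfl

theorem sum_ite_coe {t : ℕ} {M : Type} [AddCommMonoid M] (m : ℕ) (f : Fin t → M) :
    ∑ j : Fin t, (if m = (j:ℕ) then f j else 0) = if h : m < t then f ⟨m, h⟩ else 0 := by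
  by_cases h : m < t
  · rw [dif_pos h, Finset.sum_eq_single (⟨m, h⟩ : Fin t)]
    · rw [if_pos rfl]
    · intro j _ hj
      rw [if_neg]
      intro he
      exact hj (Fin.ext he.symm)
    · intro hmem; exact absurd (Finset.mem_univ _) hmem
  · rw [dif_neg h, Finset.sum_eq_zero]
    intro j _
    rw [if_neg]
    have := j.isLt
    omega

theorem d0_mulVec (w1 t : ℕ) (c : Fin t → Poly K 3) (k : Fin (t+1)) :
    (d0 K w1 t).mulVec c k
      = (if h : (k:ℕ) < t then sa K w1 * c ⟨(k:ℕ), h⟩ else 0)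
        + (if h : 0 < (k:ℕ) then
            -(sb K * c ⟨(k:ℕ)-1, by have := k.isLt; omega⟩) else 0) := by
  have hsplit : ∀ j : Fin t, d0 K w1 t k j * c j
      = (if (k:ℕ) = (j:ℕ) then sa K w1 * c j else 0)
        + (if (k:ℕ) = (j:ℕ)+1 then -(sb K * c j) else 0) := by
    intro j
    rw [d0, add_mul]
    congr 1
    · split <;> simp
    · split <;> simp
  rw [Matrix.mulVec, dotProduct]
  rw [Finset.sum_congr rfl (fun j _ => hsplit j), Finset.sum_add_distrib]
  congr 1
  · exact sum_ite_coe (k:ℕ) _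
  · by_cases hk : 0 < (k:ℕ)
    · rw [dif_pos hk]
      have hcong : ∀ j : Fin t, (if (k:ℕ) = (j:ℕ)+1 then -(sb K * c j) else 0)
          = (if (k:ℕ)-1 = (j:ℕ) then -(sb K * c j) else 0) := by
        intro j
        apply if_congr _ rfl rfl
        omega
      rw [Finset.sum_congr rfl (fun j _ => hcong j), sum_ite_coe ((k:ℕ)-1) _,
        dif_pos (by have := k.isLt; omega : (k:ℕ)-1 < t)]
    · rw [dif_neg hk, Finset.sum_eq_zero]
      intro j _
      rw [if_neg (by omega)]

theorem exact_zero_res (w1 t : ℕ) (hw1 : 1 ≤ w1) :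
    LinearMap.ker (aug (gg K w1 t)) = LinearMap.range (d0 K w1 t).mulVecLin := by
  ext v
  rw [LinearMap.mem_ker, LinearMap.mem_range]
  constructor
  · intro hv
    rw [aug_apply] at hv
    -- factor out X1^t
    have hfac : ∑ k : Fin (t+1), v k * gg K w1 t k
        = X 1 ^ t * ∑ k : Fin (t+1), v k * (sa K w1 ^ (k:ℕ) * sb K ^ (t - (k:ℕ))) := by
      rw [Finset.mul_sum]
      apply Finset.sum_congr rfl
      intro k _
      rw [gg_eq w1 t hw1 k]; ring
    rw [hfac] at hv
    have hs : ∑ k : Fin (t+1), v k * (sa K w1 ^ (k:ℕ) * sb K ^ (t - (k:ℕ))) = 0 := by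
      rcases mul_eq_zero.mp hv with h | h
      · exact absurd h (pow_ne_zero _ (X_ne_zero _))
      · exact h
    set vN : ℕ → Poly K 3 := fun i => if h : i < t+1 then v ⟨i,h⟩ else 0 with hvN
    have hsN : ∑ i ∈ Finset.range (t+1), vN i * (sa K w1 ^ i * sb K ^ (t - i)) = 0 := by
      rw [Finset.sum_range (fun i => vN i * (sa K w1 ^ i * sb K ^ (t - i)))]
      rw [← hs]
      apply Finset.sum_congr rfl
      intro k _
      have : vN (k:ℕ) = v k := by
        show (if h : (k:ℕ) < t+1 then v ⟨(k:ℕ),h⟩ else 0) = v k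
        rw [dif_pos k.isLt]
      rw [this]
    obtain ⟨c, hc0, hc⟩ := syz sb_ne_zero (hcancel_sb w1) t vN hsN
    refine ⟨fun j => c (j:ℕ), ?_⟩
    rw [Matrix.mulVecLin_apply]
    funext k
    rw [d0_mulVec]
    have hvk : vN (k:ℕ) = v k := by
      show (if h : (k:ℕ) < t+1 then v ⟨(k:ℕ),h⟩ else 0) = v k
      rw [dif_pos k.isLt]
    have hck := hc (k:ℕ) (by have := k.isLt; omega)
    rw [hvk] at hck
    rw [hck]
    by_cases h1 : (k:ℕ) < t
    · rw [dif_pos h1]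
      by_cases h2 : 0 < (k:ℕ)
      · rw [dif_pos h2, if_neg (by omega : ¬ (k:ℕ) = 0)]
        ring
      · rw [dif_neg h2, if_pos (by omega : (k:ℕ) = 0)]
        ring
    · rw [dif_neg h1]
      have hct : c (k:ℕ) = 0 := hc0 _ (by have := k.isLt; omega)
      rw [hct]
      by_cases h2 : 0 < (k:ℕ)
      · rw [dif_pos h2, if_neg (by omega : ¬ (k:ℕ) = 0)]
        ring
      · rw [dif_neg h2, if_pos (by omega : (k:ℕ) = 0)]
        ring
  · rintro ⟨c, rfl⟩
    rw [Matrix.mulVecLin_apply, aug_apply]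
    have hterm : ∀ k : Fin (t+1), (d0 K w1 t).mulVec c k * gg K w1 t k
        = ∑ j : Fin t, (d0 K w1 t k j * c j) * gg K w1 t k := by
      intro k
      rw [Matrix.mulVec, dotProduct, Finset.sum_mul]
    rw [Finset.sum_congr rfl (fun k _ => hterm k), Finset.sum_comm]
    rw [Finset.sum_eq_zero]
    intro j _
    have hj := j.isLt
    have hcol : ∀ k : Fin (t+1), d0 K w1 t k j * c j * gg K w1 t k
        = c j * ((if (k:ℕ) = (j:ℕ) then sa K w1 * gg K w1 t k else 0)
          + (if (k:ℕ) = (j:ℕ)+1 then -(sb K * gg K w1 t k) else 0)) := by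
      intro k
      rw [d0]
      by_cases hA : (k:ℕ) = (j:ℕ)
      · rw [if_pos hA, if_pos hA, if_neg (show ¬ (k:ℕ) = (j:ℕ)+1 by omega),
          if_neg (show ¬ (k:ℕ) = (j:ℕ)+1 by omega)]
        ring
      · rw [if_neg hA, if_neg hA]
        by_cases hB : (k:ℕ) = (j:ℕ)+1
        · rw [if_pos hB, if_pos hB]; ring
        · rw [if_neg hB, if_neg hB]; ring
    rw [Finset.sum_congr rfl (fun k _ => hcol k), ← Finset.mul_sum,
      Finset.sum_add_distrib]
    have hs1 : ∑ k : Fin (t+1), (if (k:ℕ) = (j:ℕ) then sa K w1 * gg K w1 t k else 0)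
        = sa K w1 * gg K w1 t ⟨(j:ℕ), by omega⟩ := by
      have e1 : (∑ k : Fin (t+1), if (k:ℕ) = (j:ℕ) then sa K w1 * gg K w1 t k else 0)
          = ∑ k : Fin (t+1), (if (j:ℕ) = (k:ℕ) then sa K w1 * gg K w1 t k else 0) :=
        Finset.sum_congr rfl (fun k _ => if_congr eq_comm rfl rfl)
      rw [e1, sum_ite_coe (t := t+1) (j:ℕ) (fun k => sa K w1 * gg K w1 t k),
        dif_pos (by omega : (j:ℕ) < t+1)]
    have hs2 : ∑ k : Fin (t+1), (if (k:ℕ) = (j:ℕ)+1 then -(sb K * gg K w1 t k) else 0)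
        = -(sb K * gg K w1 t ⟨(j:ℕ)+1, by omega⟩) := by
      have e2 : (∑ k : Fin (t+1), if (k:ℕ) = (j:ℕ)+1 then -(sb K * gg K w1 t k) else 0)
          = ∑ k : Fin (t+1), (if (j:ℕ)+1 = (k:ℕ) then -(sb K * gg K w1 t k) else 0) :=
        Finset.sum_congr rfl (fun k _ => if_congr eq_comm rfl rfl)
      rw [e2, sum_ite_coe (t := t+1) ((j:ℕ)+1) (fun k => -(sb K * gg K w1 t k)),
        dif_pos (by omega : (j:ℕ)+1 < t+1)]
    rw [hs1, hs2]
    have hzero : sa K w1 * gg K w1 t ⟨(j:ℕ), by omega⟩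
        + -(sb K * gg K w1 t ⟨(j:ℕ)+1, by omega⟩) = 0 := by
      rw [gg_eq w1 t hw1, gg_eq w1 t hw1]
      show sa K w1 * (X 1 ^ t * (sa K w1 ^ (j:ℕ) * sb K ^ (t - (j:ℕ))))
        + -(sb K * (X 1 ^ t * (sa K w1 ^ ((j:ℕ)+1) * sb K ^ (t - ((j:ℕ)+1))))) = 0
      rw [show t - (j:ℕ) = (t - ((j:ℕ)+1)) + 1 by omega, pow_succ, pow_succ]
      ring
    rw [hzero, mul_zero]

theorem exact_succ_res0 (w1 t : ℕ) :
    LinearMap.ker (d0 K w1 t).mulVecLin = LinearMap.range (dd K w1 t 1).mulVecLin := by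
  have hrange : LinearMap.range (dd K w1 t 1).mulVecLin = ⊥ := by
    rw [LinearMap.range_eq_bot]
    apply LinearMap.ext
    intro w
    haveI : IsEmpty (Fin (rr t 2)) := by
      rw [show rr t 2 = 0 from rfl]; infer_instance
    funext k
    rw [Matrix.mulVecLin_apply, Matrix.mulVec, dotProduct, Finset.univ_eq_empty,
      Finset.sum_empty]
    rfl
  rw [hrange]
  apply LinearMap.ker_eq_bot'.mpr
  intro c hc
  have hzero : ∀ m, ∀ h : m < t, c ⟨m, h⟩ = 0 := by
    intro m
    induction m using Nat.strong_induction_on with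
    | _ m ih =>
      intro hm
      have hk := congrFun hc (⟨m, by omega⟩ : Fin (t+1))
      rw [Matrix.mulVecLin_apply] at hk
      rw [d0_mulVec] at hk
      simp only [Pi.zero_apply] at hk
      rcases Nat.eq_zero_or_pos m with h0 | h0
      · subst h0
        rw [dif_pos hm, dif_neg (by omega), add_zero] at hk
        rcases mul_eq_zero.mp hk with h | h
        · exact absurd h (sa_ne_zero w1)
        · exact h
      · rw [dif_pos hm, dif_pos h0] at hk
        have hprev : c ⟨m-1, by omega⟩ = 0 := ih (m-1) (by omega) (by omega)
        rw [hprev, mul_zero, neg_zero, add_zero] at hk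
        rcases mul_eq_zero.mp hk with h | h
        · exact absurd h (sa_ne_zero w1)
        · exact h
  funext j
  have := hzero (j:ℕ) j.isLt
  simpa using this

theorem exact_succ_res (w1 t : ℕ) (i : ℕ) :
    LinearMap.ker (dd K w1 t i).mulVecLin = LinearMap.range (dd K w1 t (i+1)).mulVecLin := by
  match i with
  | 0 => exact exact_succ_res0 w1 t
  | (i+1) =>
    ext x
    have hx : x = 0 := by
      funext k
      exact Fin.elim0 k
    subst hx
    simp only [Submodule.zero_mem]

end EWGraph
namespace EWGraph

variable {K : Type} [Field K]

/-- the resolution -/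
def resF (K : Type) [Field K] (w1 t : ℕ) (hw1 : 1 ≤ w1) :
    GradedRes ((Ideal.span {pA K w1, pB K}) ^ t) where
  r := rr t
  t := tt w1 t
  g := gg K w1 t
  ghom := fun k => ghom_res w1 t k
  gspan := gspan_res w1 t
  d := dd K w1 t
  dhom := fun i => match i with
    | 0 => fun k k' => dhom0_res w1 t hw1 k k'
    | (_+1) => fun _ k' => Fin.elim0 k'
  exact_zero := exact_zero_res w1 t hw1
  exact_succ := exact_succ_res w1 t

theorem pA_pow_eq (w1 t : ℕ) :
    pA K w1 ^ t = monomial (Finsupp.single 0 (w1*t) + Finsupp.single 1 (w1*t)) (1:K) := by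
  rw [pA, ← pow_mul, mul_pow, X_pow_eq_monomial, X_pow_eq_monomial, monomial_mul, one_mul]

theorem pB_pow_eq (t : ℕ) :
    pB K ^ t = monomial (Finsupp.single 1 t + Finsupp.single 2 t) (1:K) := by
  rw [pB, mul_pow, X_pow_eq_monomial, X_pow_eq_monomial, monomial_mul, one_mul]

theorem weight_one_single (i : Fin 3) (k : ℕ) :
    Finsupp.weight 1 (Finsupp.single i k) = k := by
  rw [Finsupp.weight_apply, Finsupp.sum_single_index] <;> simp

theorem pA_ne_zero (w1 : ℕ) : pA K w1 ≠ 0 :=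
  pow_ne_zero _ (mul_ne_zero (X_ne_zero _) (X_ne_zero _))

theorem pB_ne_zero : pB K ≠ 0 := mul_ne_zero (X_ne_zero _) (X_ne_zero _)

theorem map_killX2_I (w1 t : ℕ) :
    Ideal.map (killX K 2) ((Ideal.span {pA K w1, pB K}) ^ t)
      = Ideal.span {pA K w1 ^ t} := by
  rw [Ideal.map_pow, Ideal.map_span, Set.image_insert_eq, Set.image_singleton]
  have h1 : killX K 2 (pA K w1) = pA K w1 := by
    rw [pA, map_pow, map_mul, killX_X_of_ne (by decide : (0:Fin 3) ≠ 2),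
      killX_X_of_ne (by decide : (1:Fin 3) ≠ 2)]
  have h2 : killX K 2 (pB K) = 0 := by
    rw [pB, map_mul, (show killX K 2 (X 2) = 0 from killX_X_self 2), mul_zero]
  rw [h1, h2, Ideal.span_insert, Ideal.span_singleton_eq_bot.mpr rfl, sup_bot_eq,
    Ideal.span_singleton_pow]

theorem map_killX0_I (w1 t : ℕ) (hw1 : 1 ≤ w1) :
    Ideal.map (killX K 0) ((Ideal.span {pA K w1, pB K}) ^ t)
      = Ideal.span {pB K ^ t} := by
  rw [Ideal.map_pow, Ideal.map_span, Set.image_insert_eq, Set.image_singleton]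
  have h1 : killX K 0 (pA K w1) = 0 := by
    rw [pA, map_pow, map_mul, (show killX K 0 (X 0) = 0 from killX_X_self 0), zero_mul,
      zero_pow (by omega : w1 ≠ 0)]
  have h2 : killX K 0 (pB K) = pB K := by
    rw [pB, map_mul, killX_X_of_ne (by decide : (1:Fin 3) ≠ 0),
      killX_X_of_ne (by decide : (2:Fin 3) ≠ 0)]
  rw [h1, h2, Set.pair_comm, Ideal.span_insert, Ideal.span_singleton_eq_bot.mpr rfl,
    sup_bot_eq, Ideal.span_singleton_pow]

theorem aug_single {n m : ℕ} (g : Fin m → Poly K n) (k : Fin m) (p : Poly K n) :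
    aug g (Pi.single k p) = p * g k := by
  rw [aug_apply, Finset.sum_eq_single k]
  · rw [Pi.single_eq_same]
  · intro j _ hj
    rw [Pi.single_eq_of_ne hj, zero_mul]
  · intro h; exact absurd (Finset.mem_univ _) h

/-- homogeneity data from PieceHomog at twist 0 for a nonzero polynomial -/
theorem piece_homog_nonzero {g : Poly K 3} {d : ℤ} (h : PieceHomog 0 d g) (hg : g ≠ 0) :
    g.IsHomogeneous (d.toNat) ∧ 0 ≤ d := by
  rw [PieceHomog] at h
  by_cases hd : (0:ℤ) ≤ d - 0
  · rw [if_pos hd, sub_zero] at h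
    exact ⟨h, by omega⟩
  · rw [if_neg hd] at h
    exact absurd h hg

theorem pd_eq (w1 t : ℕ) (hw1 : 2 ≤ w1) (ht : 1 ≤ t) :
    pdQuot ((Ideal.span {pA K w1, pB K}) ^ t) = 2 := by
  have hw1' : 1 ≤ w1 := by omega
  apply le_antisymm
  · apply Nat.sInf_le
    refine ⟨resF K w1 t hw1', ?_⟩
    intro i hi
    match i, hi with
    | (i+2), _ => rfl
  · have hmem2 : 2 ∈ {m : ℕ | ∃ F : GradedRes ((Ideal.span {pA K w1, pB K}) ^ t),
        ∀ i : ℕ, m ≤ i → F.r i = 0} :=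
      ⟨resF K w1 t hw1', fun i hi => by
        match i, hi with
        | (i+2), _ => rfl⟩
    apply le_csInf ⟨2, hmem2⟩
    rintro m ⟨F, hF⟩
    by_contra hm
    push_neg at hm
    have hr1 : F.r 1 = 0 := hF 1 (by omega)
    -- kernel of aug is trivial
    have hker : LinearMap.ker (aug F.g) = ⊥ := by
      rw [F.exact_zero, LinearMap.range_eq_bot]
      apply LinearMap.ext
      intro w
      haveI : IsEmpty (Fin (F.r 1)) := by rw [hr1]; infer_instance
      funext k
      rw [Matrix.mulVecLin_apply, Matrix.mulVec, dotProduct, Finset.univ_eq_empty,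
        Finset.sum_empty]
      rfl
    by_cases hzero : ∃ k, F.g k = 0
    · obtain ⟨k, hk⟩ := hzero
      have hmem : Pi.single k (1 : Poly K 3) ∈ LinearMap.ker (aug F.g) := by
        rw [LinearMap.mem_ker, aug_single, hk, mul_zero]
      rw [hker, Submodule.mem_bot] at hmem
      have := congrFun hmem k
      rw [Pi.single_eq_same] at this
      exact one_ne_zero this
    · push_neg at hzero
      rcases Nat.lt_or_ge (F.r 0) 2 with h2 | h2
      · rcases Nat.lt_or_ge (F.r 0) 1 with h1 | h1
        · -- r 0 = 0 : ideal would be ⊥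
          haveI : IsEmpty (Fin (F.r 0)) := by
            rw [show F.r 0 = 0 by omega]; infer_instance
          have hspan := F.gspan
          rw [Set.range_eq_empty, Ideal.span_empty] at hspan
          have hmem : pB K ^ t ∈ (Ideal.span {pA K w1, pB K}) ^ t :=
            Ideal.pow_mem_pow (Ideal.subset_span (by simp)) t
          rw [← hspan, Submodule.mem_bot] at hmem
          exact pow_ne_zero t pB_ne_zero hmem
        · -- r 0 = 1 : ideal would be principal
          have hr0 : F.r 0 = 1 := by omega
          set k0 : Fin (F.r 0) := ⟨0, by omega⟩ with hk0
          have hrange : Set.range F.g = {F.g k0} := by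
            apply Set.eq_singleton_iff_unique_mem.mpr
            refine ⟨⟨k0, rfl⟩, ?_⟩
            rintro x ⟨k, rfl⟩
            have : k = k0 := Fin.ext (by omega)
            rw [this]
          have hIg : (Ideal.span {pA K w1, pB K}) ^ t = Ideal.span {F.g k0} := by
            rw [← hrange]
            exact F.gspan.symm
          have hg0 : F.g k0 ≠ 0 := hzero k0
          obtain ⟨hhom, -⟩ := piece_homog_nonzero (F.ghom k0) hg0
          set d := (F.t 0 k0).toNat with hd
          -- X2 side
          have hmap2 : Ideal.span {pA K w1 ^ t} = Ideal.span {killX K 2 (F.g k0)} := by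
            calc Ideal.span {pA K w1 ^ t}
                = Ideal.map (killX K 2) ((Ideal.span {pA K w1, pB K}) ^ t) :=
                  (map_killX2_I w1 t).symm
              _ = Ideal.map (killX K 2) (Ideal.span {F.g k0}) :=
                  congrArg (Ideal.map (killX K 2)) hIg
              _ = Ideal.span {killX K 2 (F.g k0)} := by
                  rw [Ideal.map_span, Set.image_singleton]
          have hne2 : killX K 2 (F.g k0) ≠ 0 := by
            intro h
            rw [h, Ideal.span_singleton_eq_bot.mpr rfl, Ideal.span_singleton_eq_bot] at hmap2
            exact pow_ne_zero t (pA_ne_zero w1) hmap2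
          have hdvd2 : pA K w1 ^ t ∣ killX K 2 (F.g k0) := by
            apply Ideal.mem_span_singleton.mp
            rw [hmap2]
            exact Ideal.mem_span_singleton_self _
          have hlow : 2*(w1*t) ≤ d := by
            have := monomial_dvd_homog_le hne2 (killX_homog 2 hhom)
              (by rw [← pA_pow_eq]; exact hdvd2)
            rw [map_add, weight_one_single, weight_one_single] at this
            omega
          -- X0 side
          have hmap0 : Ideal.span {pB K ^ t} = Ideal.span {killX K 0 (F.g k0)} := by
            calc Ideal.span {pB K ^ t}
                = Ideal.map (killX K 0) ((Ideal.span {pA K w1, pB K}) ^ t) :=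
                  (map_killX0_I w1 t hw1').symm
              _ = Ideal.map (killX K 0) (Ideal.span {F.g k0}) :=
                  congrArg (Ideal.map (killX K 0)) hIg
              _ = Ideal.span {killX K 0 (F.g k0)} := by
                  rw [Ideal.map_span, Set.image_singleton]
          have hdvd0 : killX K 0 (F.g k0) ∣ pB K ^ t := by
            apply Ideal.mem_span_singleton.mp
            rw [← hmap0]
            exact Ideal.mem_span_singleton_self _
          have hhigh : d ≤ t + t := by
            have := homog_dvd_monomial_le (killX_homog 0 hhom)
              (by rw [← pB_pow_eq]; exact hdvd0)
            rw [map_add, weight_one_single, weight_one_single] at this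
            omega
          have hwt : 2*t ≤ w1*t := Nat.mul_le_mul_right t hw1
          omega
      · -- r 0 ≥ 2 : Koszul syzygy
        set k0 : Fin (F.r 0) := ⟨0, by omega⟩ with hk0
        set k1 : Fin (F.r 0) := ⟨1, by omega⟩ with hk1
        have hne : k0 ≠ k1 := by
          intro h
          have := congrArg Fin.val h
          simp only [hk0, hk1] at this
          omega
        have hmem : Pi.single k0 (F.g k1) - Pi.single k1 (F.g k0)
            ∈ LinearMap.ker (aug F.g) := by
          rw [LinearMap.mem_ker, map_sub, aug_single, aug_single, mul_comm, sub_self]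
        rw [hker, Submodule.mem_bot, sub_eq_zero] at hmem
        have := congrFun hmem k0
        rw [Pi.single_eq_same, Pi.single_eq_of_ne hne] at this
        exact hzero k1 this

theorem reg_eq (w1 t : ℕ) (hw1 : 2 ≤ w1) (ht : 1 ≤ t) :
    regQuot ((Ideal.span {pA K w1, pB K}) ^ t) = 2 * t * w1 - 1 := by
  have hw1' : 1 ≤ w1 := by omega
  have h4 : 4 ≤ 2 * t * w1 := by
    calc (4:ℕ) = 2 * 1 * 2 := by norm_num
    _ ≤ 2 * t * w1 := Nat.mul_le_mul (Nat.mul_le_mul le_rfl ht) hw1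
  have hbound : ∀ (i : ℕ) (k : Fin ((resF K w1 t hw1').r i)),
      (resF K w1 t hw1').t i k ≤ ((2 * t * w1 - 1 : ℕ) : ℤ) + i + 1 := by
    intro i k
    have hcast : ((2 * t * w1 - 1 : ℕ) : ℤ) = (2 * t * w1 : ℕ) - 1 := by
      rw [Int.ofNat_sub (by omega)]; push_cast; ring
    match i with
    | 0 =>
      show tt w1 t 0 k ≤ _
      rw [tt0_eq w1 t k]
      have hk : (k:ℕ) ≤ t := by
        have : (k:ℕ) < rr t 0 := k.isLt
        rw [show rr t 0 = t + 1 from rfl] at this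
        omega
      have hN : 2*w1*(k:ℕ) + 2*(t - (k:ℕ)) ≤ 2*t*w1 := by
        have h5 : 2*(t - (k:ℕ)) ≤ 2*w1*(t - (k:ℕ)) := by
          have : 2 ≤ 2*w1 := by omega
          exact Nat.mul_le_mul_right _ this
        have h6 : 2*w1*(k:ℕ) + 2*w1*(t - (k:ℕ)) = 2*w1*t := by
          rw [← Nat.mul_add, show (k:ℕ) + (t - (k:ℕ)) = t by omega]
        have h7 : 2*w1*t = 2*t*w1 := by ring
        omega
      omega
    | 1 =>
      show tt w1 t 1 k ≤ _
      rw [tt1_eq w1 t k]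
      have hk : (k:ℕ) + 1 ≤ t := by
        have : (k:ℕ) < rr t 1 := k.isLt
        rw [show rr t 1 = t from rfl] at this
        omega
      have hN : 2*w1*((k:ℕ)+1) + 2*(t - ((k:ℕ)+1)) ≤ 2*t*w1 := by
        have h5 : 2*(t - ((k:ℕ)+1)) ≤ 2*w1*(t - ((k:ℕ)+1)) := by
          have : 2 ≤ 2*w1 := by omega
          exact Nat.mul_le_mul_right _ this
        have h6 : 2*w1*((k:ℕ)+1) + 2*w1*(t - ((k:ℕ)+1)) = 2*w1*t := by
          rw [← Nat.mul_add, show ((k:ℕ)+1) + (t - ((k:ℕ)+1)) = t by omega]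
        have h7 : 2*w1*t = 2*t*w1 := by ring
        omega
      omega
    | (i+2) => exact Fin.elim0 k
  apply le_antisymm
  · exact Nat.sInf_le ⟨resF K w1 t hw1', hbound⟩
  · have hmemρ : (2 * t * w1 - 1) ∈ {ρ : ℕ |
        ∃ F : GradedRes ((Ideal.span {pA K w1, pB K}) ^ t),
          ∀ (i : ℕ) (k : Fin (F.r i)), F.t i k ≤ (ρ : ℤ) + i + 1} :=
      ⟨resF K w1 t hw1', hbound⟩
    apply le_csInf ⟨2 * t * w1 - 1, hmemρ⟩
    rintro ρ ⟨F, hF⟩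
    by_contra hρ
    push_neg at hρ
    -- all images under killX 2 vanish
    have hkill : ∀ k : Fin (F.r 0), killX K 2 (F.g k) = 0 := by
      intro k
      by_contra hne
      have hg0 : F.g k ≠ 0 := fun h => hne (by rw [h, map_zero])
      obtain ⟨hhom, hd0⟩ := piece_homog_nonzero (F.ghom k) hg0
      have hin : F.g k ∈ (Ideal.span {pA K w1, pB K}) ^ t := by
        have h0 : F.g k ∈ Ideal.span (Set.range F.g) := Ideal.subset_span ⟨k, rfl⟩
        rwa [F.gspan] at h0
      have hmap : killX K 2 (F.g k) ∈ Ideal.span {pA K w1 ^ t} := by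
        rw [← map_killX2_I w1 t]
        exact Ideal.mem_map_of_mem _ hin
      have hdvd : pA K w1 ^ t ∣ killX K 2 (F.g k) := Ideal.mem_span_singleton.mp hmap
      have hlow := monomial_dvd_homog_le hne (killX_homog 2 hhom)
        (by rw [← pA_pow_eq]; exact hdvd)
      rw [map_add, weight_one_single, weight_one_single] at hlow
      have hb := hF 0 k
      have hup : (F.t 0 k).toNat ≤ ρ + 1 := by
        push_cast at hb
        omega
      have hww : 2*(w1*t) = 2*t*w1 := by ring
      omega
    have hbot : Ideal.span {pA K w1 ^ t} = ⊥ := by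
      rw [← map_killX2_I w1 t, ← F.gspan, Ideal.map_span]
      apply Ideal.span_eq_bot.mpr
      rintro x ⟨y, ⟨k, rfl⟩, rfl⟩
      exact hkill k
    rw [Ideal.span_singleton_eq_bot] at hbot
    exact pow_ne_zero t (pA_ne_zero w1) hbot

end EWGraph
namespace EWGraph
/-- for `I = ((x_1x_2)^{w_1}, x_2x_3)` with `w_1 ≥ 2`, for all `t ≥ 1`:
`reg(S/I^t) = 2 t w_1 - 1` and `depth(S/I^t) = 1`. -/
theorem path3_powers (K : Type) [Field K] (w1 : ℕ) (hw1 : 2 ≤ w1)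
    (t : ℕ) (ht : 1 ≤ t) :
    regQuot ((Ideal.span {((X 0 * X 1 : Poly K 3)) ^ w1, X 1 * X 2}) ^ t) =
        2 * t * w1 - 1 ∧
      depthQuot ((Ideal.span {((X 0 * X 1 : Poly K 3)) ^ w1, X 1 * X 2}) ^ t) = 1 := by
  have hI : (Ideal.span {((X 0 * X 1 : Poly K 3)) ^ w1, X 1 * X 2}) ^ t
      = (Ideal.span {pA K w1, pB K}) ^ t := rfl
  constructor
  · rw [hI]
    exact reg_eq w1 t hw1 ht
  · rw [hI, depthQuot, pd_eq w1 t hw1 ht]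

end EWGraph
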